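/- Fixed-point short-time existence (abstract version): let (E, ‖·‖) be a Banach space with a norm depending on T (the spaces x^γC^{2,α}_Φ(M×[0,T])), let Q_T : F_T → E_T be bounded linear solution operators with ‖Q_T‖ ≤ K uniformly in T ≤ T₁, and let F = F₁ + F₂ satisfy, on the ball {‖u‖ ≤ μ}: ‖F₁(u)−F₁(u')‖_{F¹} ≤ C_μ‖u−u'‖, ‖F₁(u)‖_{F¹} ≤ C_μ, ‖F₂(u)−F₂(u')‖_{F} ≤ C_μ max(‖u‖,‖u'‖)‖u−u'‖, ‖F₂(u)‖_F ≤ C_μ‖u‖², where the inclusion of F¹-data gains a factor √T in E. Then for T' > 0 small enough the map u ↦ Q_{T'}(F(u)) is a contraction on a small closed ball of E_{T'}, and hence has a unique fixed point u*, which solves (∂_t + aΔ)u = F(u), u|_{t=0} = 0. -/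

import Mathlib

/-- Abstract fixed-point short-time existence: `E T` models `x^γC^{2,α}_Φ(M×[0,T])`,
`D T` the data space `x^γC^α_Φ(M×[0,T])`, `D1 T` the better space
`x^γC^{1,α}_Φ(M×[0,T])` whose inclusion `ι T` into `D T` gains a factor `√T`
(via the parametrix), and `Q T` the solution operator (parametrix) of
`∂_t + aΔ`, bounded uniformly by `K`. If `F = F₁ + F₂` satisfies the stated
Lipschitz/boundedness estimates on the ball of radius `μ`, then for `T' > 0`
small enough the map `u ↦ Q_{T'}(F(u))` is a contraction of a small closed
ball into itself and possesses there a unique fixed point `u*` (the solution of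
`(∂_t + aΔ)u = F(u)`, `u|_{t=0} = 0`). -/
theorem stmt_19 (T₁ : ℝ) (hT₁ : 0 < T₁)
    (E D D1 : ℝ → Type*)
    [∀ T, NormedAddCommGroup (E T)] [∀ T, NormedSpace ℝ (E T)] [∀ T, CompleteSpace (E T)]
    [∀ T, NormedAddCommGroup (D T)] [∀ T, NormedSpace ℝ (D T)]
    [∀ T, NormedAddCommGroup (D1 T)] [∀ T, NormedSpace ℝ (D1 T)]
    (Q : ∀ T, D T →L[ℝ] E T) (K : ℝ) (hK : 0 < K)
    (hQ : ∀ T ∈ Set.Ioc (0 : ℝ) T₁, ‖Q T‖ ≤ K)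
    (ι : ∀ T, D1 T →L[ℝ] D T)
    (hι : ∀ T ∈ Set.Ioc (0 : ℝ) T₁, ∀ v : D1 T, ‖ι T v‖ ≤ Real.sqrt T * ‖v‖)
    (F1 : ∀ T, E T → D1 T) (F2 : ∀ T, E T → D T)
    (μ : ℝ) (hμ : 0 < μ) (Cμ : ℝ) (hCμ : 0 < Cμ)
    (hF1lip : ∀ T ∈ Set.Ioc (0 : ℝ) T₁, ∀ u u' : E T, ‖u‖ ≤ μ → ‖u'‖ ≤ μ →
      ‖F1 T u - F1 T u'‖ ≤ Cμ * ‖u - u'‖)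
    (hF1bd : ∀ T ∈ Set.Ioc (0 : ℝ) T₁, ∀ u : E T, ‖u‖ ≤ μ → ‖F1 T u‖ ≤ Cμ)
    (hF2lip : ∀ T ∈ Set.Ioc (0 : ℝ) T₁, ∀ u u' : E T, ‖u‖ ≤ μ → ‖u'‖ ≤ μ →
      ‖F2 T u - F2 T u'‖ ≤ Cμ * max ‖u‖ ‖u'‖ * ‖u - u'‖)
    (hF2bd : ∀ T ∈ Set.Ioc (0 : ℝ) T₁, ∀ u : E T, ‖u‖ ≤ μ → ‖F2 T u‖ ≤ Cμ * ‖u‖ ^ 2) :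
    ∃ T' ∈ Set.Ioc (0 : ℝ) T₁, ∃ r : ℝ, 0 < r ∧ r ≤ μ ∧ ∃ θ : ℝ, 0 ≤ θ ∧ θ < 1 ∧
      (∀ u : E T', ‖u‖ ≤ r → ‖Q T' (ι T' (F1 T' u) + F2 T' u)‖ ≤ r) ∧
      (∀ u u' : E T', ‖u‖ ≤ r → ‖u'‖ ≤ r →
        ‖Q T' (ι T' (F1 T' u) + F2 T' u) - Q T' (ι T' (F1 T' u') + F2 T' u')‖ ≤
          θ * ‖u - u'‖) ∧
      ∃ ustar : E T', ‖ustar‖ ≤ r ∧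
        ustar = Q T' (ι T' (F1 T' ustar) + F2 T' ustar) ∧
        ∀ v : E T', ‖v‖ ≤ r → v = Q T' (ι T' (F1 T' v) + F2 T' v) → v = ustar := by
  classical
  set r : ℝ := min μ (1/(4*K*Cμ)) with hrdef
  have hr : 0 < r := lt_min hμ (by positivity)
  set s : ℝ := min (r/(2*K*Cμ)) (1/(4*K*Cμ)) with hsdef
  have hs : 0 < s := lt_min (by positivity) (by positivity)
  set T' : ℝ := min T₁ (s^2) with hT'def
  have hT'pos : 0 < T' := lt_min hT₁ (by positivity)
  have hT'mem : T' ∈ Set.Ioc (0:ℝ) T₁ := ⟨hT'pos, min_le_left _ _⟩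
  have hsq : Real.sqrt T' ≤ s := by
    calc Real.sqrt T' ≤ Real.sqrt (s^2) := Real.sqrt_le_sqrt (min_le_right _ _)
      _ = s := by rw [Real.sqrt_sq hs.le]
  have h1 : K * Cμ * Real.sqrt T' ≤ r/2 := by
    have h := hsq.trans (min_le_left _ _)
    calc K*Cμ*Real.sqrt T' ≤ K*Cμ*(r/(2*K*Cμ)) :=
          mul_le_mul_of_nonneg_left h (by positivity)
      _ = r/2 := by field_simp
  have h2 : K * Cμ * Real.sqrt T' ≤ 1/4 := by
    have h := hsq.trans (min_le_right _ _)
    calc K*Cμ*Real.sqrt T' ≤ K*Cμ*(1/(4*K*Cμ)) :=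
          mul_le_mul_of_nonneg_left h (by positivity)
      _ = 1/4 := by field_simp
  have h3 : K * Cμ * r ≤ 1/4 := by
    have h : r ≤ 1/(4*K*Cμ) := min_le_right _ _
    calc K*Cμ*r ≤ K*Cμ*(1/(4*K*Cμ)) := mul_le_mul_of_nonneg_left h (by positivity)
      _ = 1/4 := by field_simp
  have hrμ : r ≤ μ := min_le_left _ _
  have hQb := hQ T' hT'mem
  -- self-map estimate
  have hself : ∀ u : E T', ‖u‖ ≤ r → ‖Q T' (ι T' (F1 T' u) + F2 T' u)‖ ≤ r := by
    intro u hu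
    have hur : ‖u‖ ≤ μ := hu.trans hrμ
    have hb1 : ‖ι T' (F1 T' u)‖ ≤ Real.sqrt T' * Cμ :=
      (hι T' hT'mem _).trans
        (mul_le_mul_of_nonneg_left (hF1bd T' hT'mem u hur) (Real.sqrt_nonneg _))
    have hb2 : ‖F2 T' u‖ ≤ Cμ * ‖u‖^2 := hF2bd T' hT'mem u hur
    calc ‖Q T' (ι T' (F1 T' u) + F2 T' u)‖
        ≤ K * ‖ι T' (F1 T' u) + F2 T' u‖ :=
          (ContinuousLinearMap.le_opNorm _ _).trans
            (mul_le_mul_of_nonneg_right hQb (norm_nonneg _))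
      _ ≤ K * (Real.sqrt T' * Cμ + Cμ * ‖u‖^2) :=
          mul_le_mul_of_nonneg_left
            ((norm_add_le _ _).trans (add_le_add hb1 hb2)) hK.le
      _ ≤ r := by
          have h4 : ‖u‖^2 ≤ r*r := by nlinarith [norm_nonneg u]
          have h5 : K*Cμ*‖u‖^2 ≤ K*Cμ*(r*r) :=
            mul_le_mul_of_nonneg_left h4 (by positivity)
          have h6 : K*Cμ*r*r ≤ (1/4)*r := mul_le_mul_of_nonneg_right h3 hr.le
          nlinarith [h1, h5, h6, hr.le]
  -- contraction estimate
  have hcontr : ∀ u u' : E T', ‖u‖ ≤ r → ‖u'‖ ≤ r →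
      ‖Q T' (ι T' (F1 T' u) + F2 T' u) - Q T' (ι T' (F1 T' u') + F2 T' u')‖ ≤
        (1/2) * ‖u - u'‖ := by
    intro u u' hu hu'
    have hur : ‖u‖ ≤ μ := hu.trans hrμ
    have hur' : ‖u'‖ ≤ μ := hu'.trans hrμ
    have key : Q T' (ι T' (F1 T' u) + F2 T' u) - Q T' (ι T' (F1 T' u') + F2 T' u')
        = Q T' (ι T' (F1 T' u - F1 T' u') + (F2 T' u - F2 T' u')) := by
      rw [← map_sub, map_sub (ι T')]; congr 1; abel
    have hb1 : ‖ι T' (F1 T' u - F1 T' u')‖ ≤ Real.sqrt T' * (Cμ * ‖u - u'‖) :=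
      (hι T' hT'mem _).trans
        (mul_le_mul_of_nonneg_left (hF1lip T' hT'mem u u' hur hur') (Real.sqrt_nonneg _))
    have hb2 : ‖F2 T' u - F2 T' u'‖ ≤ Cμ * r * ‖u - u'‖ := by
      have h := hF2lip T' hT'mem u u' hur hur'
      have hmax : max ‖u‖ ‖u'‖ ≤ r := max_le hu hu'
      calc ‖F2 T' u - F2 T' u'‖ ≤ Cμ * max ‖u‖ ‖u'‖ * ‖u - u'‖ := h
        _ ≤ Cμ * r * ‖u - u'‖ := by
            apply mul_le_mul_of_nonneg_right _ (norm_nonneg _)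
            exact mul_le_mul_of_nonneg_left hmax hCμ.le
    rw [key]
    calc ‖Q T' (ι T' (F1 T' u - F1 T' u') + (F2 T' u - F2 T' u'))‖
        ≤ K * ‖ι T' (F1 T' u - F1 T' u') + (F2 T' u - F2 T' u')‖ :=
          (ContinuousLinearMap.le_opNorm _ _).trans
            (mul_le_mul_of_nonneg_right hQb (norm_nonneg _))
      _ ≤ K * (Real.sqrt T' * (Cμ * ‖u - u'‖) + Cμ * r * ‖u - u'‖) :=
          mul_le_mul_of_nonneg_left
            ((norm_add_le _ _).trans (add_le_add hb1 hb2)) hK.le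
      _ ≤ (1/2) * ‖u - u'‖ := by
          have h7 : K*Cμ*Real.sqrt T' * ‖u - u'‖ ≤ (1/4) * ‖u - u'‖ :=
            mul_le_mul_of_nonneg_right h2 (norm_nonneg _)
          have h8 : K*Cμ*r * ‖u - u'‖ ≤ (1/4) * ‖u - u'‖ :=
            mul_le_mul_of_nonneg_right h3 (norm_nonneg _)
          nlinarith [h7, h8, norm_nonneg (u - u')]
  refine ⟨T', hT'mem, r, hr, hrμ, 1/2, by norm_num, by norm_num, hself, hcontr, ?_⟩
  -- Banach fixed point on the closed ball
  let S : Set (E T') := Metric.closedBall 0 r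
  haveI : CompleteSpace S := IsClosed.completeSpace_coe (hs := Metric.isClosed_closedBall)
  haveI : Nonempty S := ⟨⟨0, mem_closedBall_zero_iff.mpr (by simpa using hr.le)⟩⟩
  let Φ : S → S := fun u => ⟨Q T' (ι T' (F1 T' u.1) + F2 T' u.1), by
    rw [Metric.mem_closedBall, dist_zero_right]
    exact hself u.1 (mem_closedBall_zero_iff.mp u.2)⟩
  have hΦlip : LipschitzWith (1/2 : NNReal) Φ := by
    apply LipschitzWith.of_dist_le_mul
    intro a b
    rw [Subtype.dist_eq, Subtype.dist_eq, dist_eq_norm, dist_eq_norm]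
    have := hcontr a.1 b.1 (mem_closedBall_zero_iff.mp a.2)
      (mem_closedBall_zero_iff.mp b.2)
    simpa [Φ] using this
  have hΦ : ContractingWith (1/2 : NNReal) Φ :=
    ⟨by rw [← NNReal.coe_lt_coe]; push_cast; norm_num, hΦlip⟩
  obtain ⟨u0, hfix⟩ : ∃ u0 : S, Φ u0 = u0 := ⟨hΦ.fixedPoint Φ, hΦ.fixedPoint_isFixedPt⟩
  have hu0r : ‖(u0 : E T')‖ ≤ r := mem_closedBall_zero_iff.mp u0.2
  have hu0eq : (u0 : E T') = Q T' (ι T' (F1 T' u0.1) + F2 T' u0.1) :=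
    (congrArg Subtype.val hfix).symm
  refine ⟨u0.1, hu0r, hu0eq, ?_⟩
  intro v hv hveq
  have h := hcontr v u0.1 hv hu0r
  rw [← hveq, ← hu0eq] at h
  have hz : ‖v - u0.1‖ = 0 := le_antisymm (by linarith) (norm_nonneg _)
  exact sub_eq_zero.mp (norm_eq_zero.mp hz)
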